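/- Cayley-transform form of the scattering matrix: decompose A in block form A = [[A_II, A_IB],[A_BI, A_BB]] with A_II invertible, set Ã := T⁻¹(A_BB − A_BI A_II⁻¹ A_IB). Then Ã − iId is invertible and the scattering matrix S = B(A − iBᵀTB)⁻¹(A + iBᵀTB)Bᵀ equals (Ã − iId)⁻¹(Ã + iId), where B is the boolean restriction to the second (boundary) block. -/

import Mathlib

open Matrix

/-- The boolean restriction matrix onto the boundary (second) block of coordinates. -/
def Bbd (n m : ℕ) : Matrix (Fin m) (Fin n ⊕ Fin m) ℂ :=
  Matrix.of fun i x => Sum.elim (fun _ => (0:ℂ)) (fun j => if i = j then 1 else 0) x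

lemma Bbd_eq (n m : ℕ) :
    Bbd n m = fromCols (0 : Matrix (Fin m) (Fin n) ℂ) (1 : Matrix (Fin m) (Fin m) ℂ) := by
  ext i x
  cases x <;> simp [Bbd, fromCols, one_apply]

/-- Cayley-transform form of the scattering matrix: with `A` block-partitioned,
`A_II` invertible and `Ã = T⁻¹(A_BB − A_BI A_II⁻¹ A_IB)`, the matrix `Ã − iId` is
invertible and `S = B(A − iBᴴTB)⁻¹(A + iBᴴTB)Bᴴ = (Ã − iId)⁻¹(Ã + iId)`. -/
theorem stmt11 {n m : ℕ} (AII : Matrix (Fin n) (Fin n) ℂ)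
    (AIB : Matrix (Fin n) (Fin m) ℂ) (ABI : Matrix (Fin m) (Fin n) ℂ)
    (ABB T : Matrix (Fin m) (Fin m) ℂ)
    (hAII : IsUnit AII) (hT : IsUnit T)
    (A : Matrix (Fin n ⊕ Fin m) (Fin n ⊕ Fin m) ℂ)
    (hA : A = Matrix.fromBlocks AII AIB ABI ABB)
    (hinv : IsUnit (A - Complex.I • ((Bbd n m)ᴴ * T * Bbd n m)))
    (Atil : Matrix (Fin m) (Fin m) ℂ)
    (hAtil : Atil = T⁻¹ * (ABB - ABI * AII⁻¹ * AIB)) :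
    IsUnit (Atil - Complex.I • (1 : Matrix (Fin m) (Fin m) ℂ)) ∧
    Bbd n m * (A - Complex.I • ((Bbd n m)ᴴ * T * Bbd n m))⁻¹
        * (A + Complex.I • ((Bbd n m)ᴴ * T * Bbd n m)) * (Bbd n m)ᴴ
      = (Atil - Complex.I • (1 : Matrix (Fin m) (Fin m) ℂ))⁻¹
        * (Atil + Complex.I • (1 : Matrix (Fin m) (Fin m) ℂ)) := by
  subst hA
  have hB := Bbd_eq n m
  have hBH : (Bbd n m)ᴴ
      = fromRows (0 : Matrix (Fin n) (Fin m) ℂ) (1 : Matrix (Fin m) (Fin m) ℂ) := by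
    rw [hB, conjTranspose_fromCols_eq_fromRows_conjTranspose]
    simp
  have hBTB : (Bbd n m)ᴴ * T * Bbd n m = fromBlocks 0 0 0 T := by
    rw [hBH, hB, fromRows_mul, fromRows_mul_fromCols]
    simp
  rw [hBTB] at hinv ⊢
  have hMb : fromBlocks AII AIB ABI ABB
        - Complex.I • (fromBlocks 0 0 0 T : Matrix (Fin n ⊕ Fin m) (Fin n ⊕ Fin m) ℂ)
      = fromBlocks AII AIB ABI (ABB - Complex.I • T) := by
    rw [fromBlocks_smul, sub_eq_add_neg, fromBlocks_neg, fromBlocks_add]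
    simp [sub_eq_add_neg]
  have hNb : fromBlocks AII AIB ABI ABB
        + Complex.I • (fromBlocks 0 0 0 T : Matrix (Fin n ⊕ Fin m) (Fin n ⊕ Fin m) ℂ)
      = fromBlocks AII AIB ABI (ABB + Complex.I • T) := by
    rw [fromBlocks_smul, fromBlocks_add]
    simp
  rw [hMb] at hinv ⊢
  rw [hNb]
  haveI iAII : Invertible AII := hAII.invertible
  have hiA : (⅟AII : Matrix (Fin n) (Fin n) ℂ) = AII⁻¹ := invOf_eq_nonsing_inv AII
  have hTdet : IsUnit T.det := (isUnit_iff_isUnit_det T).mp hT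
  have hTA : T * Atil = ABB - ABI * AII⁻¹ * AIB := by
    rw [hAtil, ← mul_assoc, mul_nonsing_inv T hTdet, one_mul]
  have hS : (ABB - Complex.I • T) - ABI * ⅟AII * AIB = T * (Atil - Complex.I • 1) := by
    rw [hiA, mul_sub, hTA, mul_smul_comm, mul_one]
    abel
  have hX : (ABB + Complex.I • T) - ABI * ⅟AII * AIB = T * (Atil + Complex.I • 1) := by
    rw [hiA, mul_add, hTA, mul_smul_comm, mul_one]
    abel
  haveI iM : Invertible (fromBlocks AII AIB ABI (ABB - Complex.I • T)) := hinv.invertible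
  have hSu : IsUnit ((ABB - Complex.I • T) - ABI * ⅟AII * AIB) :=
    (isUnit_fromBlocks_iff_of_invertible₁₁).mp hinv
  have hSu' : IsUnit (T * (Atil - Complex.I • 1)) := hS ▸ hSu
  have h1 : IsUnit (Atil - Complex.I • (1 : Matrix (Fin m) (Fin m) ℂ)) := by
    have he : Atil - Complex.I • 1 = (↑hT.unit⁻¹ : Matrix (Fin m) (Fin m) ℂ)
        * (T * (Atil - Complex.I • 1)) := by
      rw [← mul_assoc, IsUnit.val_inv_mul, one_mul]
    rw [he]
    exact (hT.unit⁻¹).isUnit.mul hSu'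
  refine ⟨h1, ?_⟩
  haveI iS : Invertible ((ABB - Complex.I • T) - ABI * ⅟AII * AIB) := hSu.invertible
  rw [show (fromBlocks AII AIB ABI (ABB - Complex.I • T))⁻¹
      = ⅟(fromBlocks AII AIB ABI (ABB - Complex.I • T)) from (invOf_eq_nonsing_inv _).symm,
    invOf_fromBlocks₁₁_eq, hBH, hB, fromCols_mul_fromBlocks, fromCols_mul_fromBlocks,
    fromCols_mul_fromRows]
  simp only [Matrix.zero_mul, Matrix.one_mul, zero_add, add_zero, Matrix.mul_zero, Matrix.mul_one]
  have key : -(⅟((ABB - Complex.I • T) - ABI * ⅟AII * AIB) * ABI * ⅟AII) * AIB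
      + ⅟((ABB - Complex.I • T) - ABI * ⅟AII * AIB) * (ABB + Complex.I • T)
      = ⅟((ABB - Complex.I • T) - ABI * ⅟AII * AIB) * (T * (Atil + Complex.I • 1)) := by
    rw [← hX, mul_sub]
    simp only [Matrix.neg_mul, Matrix.mul_assoc]
    abel
  rw [key, invOf_eq_nonsing_inv, hS, Matrix.mul_inv_rev, Matrix.mul_assoc,
    ← Matrix.mul_assoc T⁻¹, nonsing_inv_mul T hTdet, Matrix.one_mul]
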